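/- arXiv:1409.6275 — 2 statements merged into one kernel-verified Lean document; each statement's English description precedes it below -/
import Mathlib

section
/- In the ring A = Z[x_1,x_2,x_3,y_{12},y_{13},y_{23}]/(x_1^3,…,y_{23}^3), the coefficient of x_1^2 x_2^2 x_3^2 y_{12}^2 y_{13}^2 y_{23}^2 in ∏_{1≤i<j≤3}(x_i+y_{ij})(x_j+y_{ij}) · (x_1+x_2+x_3)^6 equals 6·15 = 90. -/
open MvPolynomial

/-- Variables: `x₁,x₂,x₃ = X 0, X 1, X 2`; `y₁₂,y₁₃,y₂₃ = X 3, X 4, X 5`.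
The class `[M] = ∏_{1≤i<j≤3} (xᵢ+y_{ij})(x_j+y_{ij})`. -/
noncomputable def threeLinesClass : MvPolynomial (Fin 6) ℤ :=
  (X 0 + X 3) * (X 1 + X 3) * (X 0 + X 4) * (X 2 + X 4) * (X 1 + X 5) * (X 2 + X 5)

lemma coeff_mul_ofNat' (m : Fin 6 →₀ ℕ) (p : MvPolynomial (Fin 6) ℤ) (k : ℕ) [k.AtLeastTwo] :
    coeff m (p * (no_index (OfNat.ofNat k) : MvPolynomial (Fin 6) ℤ)) =
      coeff m p * OfNat.ofNat k := by
  rw [show (OfNat.ofNat k : MvPolynomial (Fin 6) ℤ) = C (OfNat.ofNat k) by norm_num]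
  rw [mul_comm, coeff_C_mul, mul_comm]

/-- `(x₁+x₂+x₃)⁶` only involves the variables `0,1,2`, so its coefficient vanishes at any
exponent vector with positive exponent at `3`, `4`, or `5`. -/
lemma coeff_Q_zero (m : Fin 6 →₀ ℕ) (i : Fin 6) (hi : i = 3 ∨ i = 4 ∨ i = 5) (h : m i ≠ 0) :
    coeff m ((X 0 + X 1 + X 2 : MvPolynomial (Fin 6) ℤ) ^ 6) = 0 := by
  by_contra hc
  have hm : m ∈ ((X 0 + X 1 + X 2 : MvPolynomial (Fin 6) ℤ) ^ 6).support :=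
    mem_support_iff.mpr hc
  have hv : i ∈ ((X 0 + X 1 + X 2 : MvPolynomial (Fin 6) ℤ) ^ 6).vars :=
    (mem_vars i).mpr ⟨m, hm, Finsupp.mem_support_iff.mpr h⟩
  have hsub : ((X 0 + X 1 + X 2 : MvPolynomial (Fin 6) ℤ) ^ 6).vars ⊆
      ({0, 1, 2} : Finset (Fin 6)) := by
    refine (vars_pow _ _).trans ?_
    refine (vars_add_subset _ _).trans ?_
    intro j hj
    rcases Finset.mem_union.mp hj with hj | hj
    · rcases Finset.mem_union.mp ((vars_add_subset _ _) hj) with hj | hj <;>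
        simp_all [vars_X]
    · simp_all [vars_X]
  have := hsub hv
  rcases hi with rfl | rfl | rfl <;> simp_all

lemma coeff_Q_zero3 (m : Fin 6 →₀ ℕ) (h : ¬ m 3 = 0) :
    coeff m ((X 0 + X 1 + X 2 : MvPolynomial (Fin 6) ℤ) ^ 6) = 0 :=
  coeff_Q_zero m 3 (Or.inl rfl) h
lemma coeff_Q_zero4 (m : Fin 6 →₀ ℕ) (h : ¬ m 4 = 0) :
    coeff m ((X 0 + X 1 + X 2 : MvPolynomial (Fin 6) ℤ) ^ 6) = 0 :=
  coeff_Q_zero m 4 (Or.inr (Or.inl rfl)) h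
lemma coeff_Q_zero5 (m : Fin 6 →₀ ℕ) (h : ¬ m 5 = 0) :
    coeff m ((X 0 + X 1 + X 2 : MvPolynomial (Fin 6) ℤ) ^ 6) = 0 :=
  coeff_Q_zero m 5 (Or.inr (Or.inr rfl)) h

set_option maxHeartbeats 1000000 in
/-- The multinomial coefficient: `x₁²x₂²x₃²` in `(x₁+x₂+x₃)⁶` has coefficient `6!/(2!2!2!) = 90`. -/
lemma coeff_Q_main (m : Fin 6 →₀ ℕ) (h0 : m 0 = 2) (h1 : m 1 = 2) (h2 : m 2 = 2)
    (h3 : m 3 = 0) (h4 : m 4 = 0) (h5 : m 5 = 0) :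
    coeff m ((X 0 + X 1 + X 2 : MvPolynomial (Fin 6) ℤ) ^ 6) = 90 := by
  ring_nf
  simp [X_pow_eq_monomial, X, monomial_mul, monomial_pow, coeff_mul_ofNat', coeff_monomial,
    Finsupp.ext_iff, Fin.forall_fin_succ, Finsupp.single_apply, Finsupp.add_apply,
    show (Fin.succ 2 : Fin 6) = 3 from rfl, show ((Fin.succ 2).succ : Fin 6) = 4 from rfl,
    show ((Fin.succ 2).succ.succ : Fin 6) = 5 from rfl,
    h0, h1, h2, h3, h4, h5]

set_option maxHeartbeats 4000000 in
/-- The coefficient of `x₁²x₂²x₃²y₁₂²y₁₃²y₂₃²` in `[M]·(x₁+x₂+x₃)⁶` equals `6·15 = 90`. -/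
theorem degree_threeLines_six_points :
    MvPolynomial.coeff (Finsupp.equivFunOnFinite.symm fun _ : Fin 6 => (2 : ℕ))
      (threeLinesClass * (X 0 + X 1 + X 2) ^ 6) = 90 := by
  have h : threeLinesClass * (X 0 + X 1 + X 2) ^ 6 =
      (X 0 + X 1 + X 2 : MvPolynomial (Fin 6) ℤ) ^ 6 *
        (X 0 + X 3) * (X 1 + X 3) * (X 0 + X 4) * (X 2 + X 4) * (X 1 + X 5) * (X 2 + X 5) := by
    rw [threeLinesClass]; ring
  rw [h]
  simp (config := { maxSteps := 1000000 }) [mul_add, coeff_add, coeff_mul_X',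
    coeff_Q_zero3, coeff_Q_zero4, coeff_Q_zero5, coeff_Q_main,
    Finsupp.mem_support_iff, Finsupp.tsub_apply, Finsupp.single_apply,
    Finsupp.equivFunOnFinite]
  apply coeff_Q_main <;> simp [Finsupp.tsub_apply, Finsupp.single_apply, Finsupp.coe_mk] <;> rfl
end

section
/- Identity of formal power series / polynomial expansion: in A(G(d,n)) ⊗ Z[h_1,…,h_k]/(h_1^{n+1},…,h_k^{n+1}), the product ∏_{i=1}^k ( ∑_{ℓ=0}^{d+1} σ_{(1)^{d+1-ℓ}} h_i^{ℓ} ) · (h_1+⋯+h_k)^D expands as ∑_{(s_0,…,s_{d+1})} σ^s · C(k; s_0,…,s_{d+1}) · C(D; (n-d-1)^{s_0}, (n-d)^{s_1}, …, (n)^{s_{d+1}}) · (point-class monomials), where the sum is over tuples with ∑ s_i = k, ∑ i·s_i = (d+1)(n−d), D = (d+1)(n−d)+k(n−d−1), and σ^s = ∏_{i=0}^{d+1} (σ_{(1)^i})^{s_i}. -/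
open Finset MvPolynomial

lemma sum_single_eq_symm {σ : Type*} [Fintype σ] [DecidableEq σ] (u : σ → ℕ) :
    (∑ i : σ, Finsupp.single i (u i)) = Finsupp.equivFunOnFinite.symm u := by
  ext a
  simp [Finsupp.single_apply, Finset.sum_ite_eq']

lemma prod_X_pow {R σ : Type*} [CommSemiring R] [Fintype σ] [DecidableEq σ] (u : σ → ℕ) :
    (∏ i : σ, (X i : MvPolynomial σ R) ^ u i)
      = monomial (Finsupp.equivFunOnFinite.symm u) 1 := by
  rw [← sum_single_eq_symm u]
  induction (univ : Finset σ) using Finset.cons_induction with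
  | empty => simp
  | cons a s ha ih =>
    rw [Finset.prod_cons, Finset.sum_cons, ih, X_pow_eq_monomial, monomial_mul, one_mul]

lemma card_fiber_eq_multinomial {ι κ : Type*} [Fintype ι] [Fintype κ] [DecidableEq ι]
    [DecidableEq κ] (s : κ → ℕ) (hs : ∑ j, s j = Fintype.card ι) :
    (univ.filter fun g : ι → κ =>
        (fun j => (univ.filter fun i => g i = j).card) = s).card
      = Nat.multinomial univ s := by
  have h1 : coeff (Finsupp.equivFunOnFinite.symm s)
      ((∑ j : κ, (X j : MvPolynomial κ ℕ)) ^ Fintype.card ι) = Nat.multinomial univ s := by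
    rw [Finset.sum_pow_eq_sum_piAntidiag, coeff_sum]
    have hterm : ∀ m : κ → ℕ,
        coeff (Finsupp.equivFunOnFinite.symm s)
          ((Nat.multinomial univ m : MvPolynomial κ ℕ) * ∏ j : κ, (X j : MvPolynomial κ ℕ) ^ m j)
        = if m = s then Nat.multinomial univ m else 0 := by
      intro m
      rw [_root_.prod_X_pow, ← C_eq_coe_nat, coeff_C_mul, coeff_monomial]
      simp only [EmbeddingLike.apply_eq_iff_eq]
      by_cases h : m = s <;> simp [h]
    rw [Finset.sum_congr rfl (fun m _ => hterm m), Finset.sum_ite_eq']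
    rw [if_pos]
    rw [mem_piAntidiag]
    exact ⟨hs, fun _ _ => mem_univ _⟩
  have h2 : coeff (Finsupp.equivFunOnFinite.symm s)
      ((∑ j : κ, (X j : MvPolynomial κ ℕ)) ^ Fintype.card ι)
      = (univ.filter fun g : ι → κ =>
          (fun j => (univ.filter fun i => g i = j).card) = s).card := by
    rw [← Finset.card_univ, ← Finset.prod_const, Finset.prod_univ_sum,
      Fintype.piFinset_univ, coeff_sum]
    have hg : ∀ g : ι → κ, (∏ i : ι, (X (g i) : MvPolynomial κ ℕ))
        = monomial (Finsupp.equivFunOnFinite.symm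
            (fun j => ((univ.filter fun i => g i = j).card : ℕ))) 1 := by
      intro g
      rw [← _root_.prod_X_pow]
      rw [← Finset.prod_fiberwise univ g (fun i => (X (g i) : MvPolynomial κ ℕ))]
      refine Finset.prod_congr rfl fun j _ => ?_
      have hx : ∀ i ∈ univ.filter fun i => g i = j,
          (X (g i) : MvPolynomial κ ℕ) = X j := fun i hi => by
        rw [(Finset.mem_filter.mp hi).2]
      rw [Finset.prod_congr rfl hx, Finset.prod_const]
    have step : ∀ g : ι → κ, coeff (Finsupp.equivFunOnFinite.symm s)
        (∏ i : ι, (X (g i) : MvPolynomial κ ℕ))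
        = if (fun j => (univ.filter fun i => g i = j).card) = s then (1:ℕ) else 0 := by
      intro g
      rw [hg g, coeff_monomial]
      simp only [EmbeddingLike.apply_eq_iff_eq]
    rw [Finset.sum_congr rfl fun g _ => step g]
    simp [Finset.sum_boole]
  rw [← h1, h2]

lemma coeff_aux {k : ℕ} {A : Type*} [CommRing A] (c b : A) (u v w : Fin k → ℕ) :
    MvPolynomial.coeff (Finsupp.equivFunOnFinite.symm w)
      ((C c * ∏ i, (X i : MvPolynomial (Fin k) A) ^ u i) *
        (C b * ∏ i, (X i : MvPolynomial (Fin k) A) ^ v i))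
      = if (fun i => u i + v i) = w then c * b else 0 := by
  rw [_root_.prod_X_pow, _root_.prod_X_pow, mul_mul_mul_comm, ← C_mul, monomial_mul, one_mul, coeff_C_mul,
    coeff_monomial]
  have hadd : Finsupp.equivFunOnFinite.symm u + Finsupp.equivFunOnFinite.symm v
      = Finsupp.equivFunOnFinite.symm (fun i => u i + v i) := by
    ext a; simp
  rw [hadd]
  simp only [EmbeddingLike.apply_eq_iff_eq]
  by_cases h : (fun i => u i + v i) = w <;> simp [h]


/-- Expansion identity for counting `d`-coned generic arrangements of `k` hyperplanes in
`Pⁿ` through `D = (d+1)(n−d) + k(n−d−1)` general points.  Here `A` is the Chow ring of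
`G(d,n)`, `σ m` denotes the Schubert class `σ_{(1)^m}`, and the hyperplane classes
`h₁,…,h_k` are the variables of `MvPolynomial (Fin k) A` (working modulo `hᵢ^{n+1}`
leaves the extracted coefficient unchanged).  The coefficient of the point-class
monomial `h₁ⁿ⋯h_kⁿ` in `∏ᵢ (∑_{ℓ=0}^{d+1} σ_{(1)^{d+1-ℓ}} hᵢˡ) · (h₁+⋯+h_k)^D` is
`∑_s σ^s · C(k; s₀,…,s_{d+1}) · C(D; (n-d-1)^{s₀}, (n-d)^{s₁}, …, (n)^{s_{d+1}})`,
the sum over tuples `s` with `∑ sᵢ = k` and `∑ i·sᵢ = (d+1)(n−d)`, where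
`σ^s = ∏ᵢ (σ_{(1)^i})^{sᵢ}`. -/
theorem d_coned_expansion (d n k : ℕ) (hdn : d < n)
    (A : Type*) [CommRing A] (σ : ℕ → A) :
    MvPolynomial.coeff (Finsupp.equivFunOnFinite.symm fun _ : Fin k => n)
        ((∏ i : Fin k, ∑ ℓ ∈ Finset.range (d + 2),
            MvPolynomial.C (σ (d + 1 - ℓ)) * (X i : MvPolynomial (Fin k) A) ^ ℓ) *
          (∑ i : Fin k, (X i : MvPolynomial (Fin k) A)) ^
            ((d + 1) * (n - d) + k * (n - d - 1))) =
      ∑ s ∈ Fintype.piFinset (fun _ : Fin (d + 2) => Finset.range (k + 1)),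
        if (∑ i, s i) = k ∧ (∑ i : Fin (d + 2), (i : ℕ) * s i) = (d + 1) * (n - d) then
          (Nat.multinomial Finset.univ s *
              (Nat.factorial ((d + 1) * (n - d) + k * (n - d - 1)) /
                ∏ i : Fin (d + 2), Nat.factorial (n - d - 1 + (i : ℕ)) ^ s i)) •
            ∏ i : Fin (d + 2), σ (i : ℕ) ^ s i
        else 0 := by
  have hd1 : d + 1 ≤ n := hdn
  set D := (d + 1) * (n - d) + k * (n - d - 1) with hD
  -- Step A: reflect each factor
  have hfac : ∀ i : Fin k,
      (∑ ℓ ∈ Finset.range (d + 2), C (σ (d + 1 - ℓ)) * (X i : MvPolynomial (Fin k) A) ^ ℓ)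
      = ∑ j : Fin (d + 2), C (σ (j : ℕ)) * (X i : MvPolynomial (Fin k) A) ^ (d + 1 - (j : ℕ)) := by
    intro i
    rw [← Finset.sum_range (fun j => C (σ j) * (X i : MvPolynomial (Fin k) A) ^ (d + 1 - j)),
      ← Finset.sum_range_reflect
        (fun j => C (σ j) * (X i : MvPolynomial (Fin k) A) ^ (d + 1 - j)) (d + 2)]
    refine Finset.sum_congr rfl fun ℓ hℓ => ?_
    have hℓ' : ℓ ≤ d + 1 := by
      have := Finset.mem_range.mp hℓ; omega
    have h1 : d + 2 - 1 - ℓ = d + 1 - ℓ := by omega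
    have h2 : d + 1 - (d + 1 - ℓ) = ℓ := Nat.sub_sub_self hℓ'
    rw [h1, h2]
  rw [Finset.prod_congr rfl fun i _ => hfac i]
  -- Step B: expand the product over factors
  rw [Finset.prod_univ_sum (fun _ : Fin k => (univ : Finset (Fin (d + 2))))
    (fun i j => C (σ (j : ℕ)) * (X i : MvPolynomial (Fin k) A) ^ (d + 1 - (j : ℕ))),
    Fintype.piFinset_univ]
  -- Step C: multinomial expansion of the power
  rw [Finset.sum_pow_eq_sum_piAntidiag (univ : Finset (Fin k))
    (fun i => (X i : MvPolynomial (Fin k) A)) D]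
  rw [Finset.sum_mul_sum, coeff_sum]
  -- Step D+E: compute coefficient of each g-term
  have hterm : ∀ g : Fin k → Fin (d + 2),
      coeff (Finsupp.equivFunOnFinite.symm fun _ : Fin k => n)
        (∑ m ∈ piAntidiag (univ : Finset (Fin k)) D,
          (∏ i : Fin k, C (σ ((g i : ℕ))) * (X i : MvPolynomial (Fin k) A) ^ (d + 1 - (g i : ℕ))) *
            ((Nat.multinomial univ m : MvPolynomial (Fin k) A) *
              ∏ i : Fin k, (X i : MvPolynomial (Fin k) A) ^ m i))
      = if (∑ i : Fin k, (n - d - 1 + (g i : ℕ))) = D then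
          Nat.multinomial univ (fun i => n - d - 1 + (g i : ℕ)) • ∏ i : Fin k, σ ((g i : ℕ))
        else 0 := by
    intro g
    rw [coeff_sum]
    have hP : (∏ i : Fin k, C (σ ((g i : ℕ))) * (X i : MvPolynomial (Fin k) A) ^ (d + 1 - (g i : ℕ)))
        = C (∏ i : Fin k, σ ((g i : ℕ))) *
            ∏ i : Fin k, (X i : MvPolynomial (Fin k) A) ^ (d + 1 - (g i : ℕ)) := by
      rw [Finset.prod_mul_distrib, map_prod]
    have hstep : ∀ m : Fin k → ℕ,
        coeff (Finsupp.equivFunOnFinite.symm fun _ : Fin k => n)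
          ((∏ i : Fin k, C (σ ((g i : ℕ))) * (X i : MvPolynomial (Fin k) A) ^ (d + 1 - (g i : ℕ))) *
            ((Nat.multinomial univ m : MvPolynomial (Fin k) A) *
              ∏ i : Fin k, (X i : MvPolynomial (Fin k) A) ^ m i))
        = if (fun i => (d + 1 - (g i : ℕ)) + m i) = (fun _ : Fin k => n) then
            (∏ i : Fin k, σ ((g i : ℕ))) * (Nat.multinomial univ m : A) else 0 := by
      intro m
      rw [hP, ← C_eq_coe_nat, coeff_aux]
    rw [Finset.sum_congr rfl fun m _ => hstep m]
    set m₀ : Fin k → ℕ := fun i => n - d - 1 + (g i : ℕ) with hm₀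
    have hgle : ∀ i, (g i : ℕ) ≤ d + 1 := fun i => by have := (g i).isLt; omega
    have hforce : ∀ m : Fin k → ℕ,
        (fun i => (d + 1 - (g i : ℕ)) + m i) = (fun _ : Fin k => n) → m = m₀ := by
      intro m hm
      funext i
      have := congrFun hm i
      have := hgle i
      simp only [hm₀]
      omega
    have hcond : (fun i => (d + 1 - (g i : ℕ)) + m₀ i) = (fun _ : Fin k => n) := by
      funext i
      have := hgle i
      simp only [hm₀]
      omega
    by_cases hmem : (∑ i : Fin k, m₀ i) = D
    · rw [Finset.sum_eq_single_of_mem m₀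
        (mem_piAntidiag.mpr ⟨hmem, fun _ _ => mem_univ _⟩)
        (fun m hm hne => by
          rw [if_neg]
          exact fun hc => hne (hforce m hc))]
      rw [if_pos hcond, if_pos hmem, mul_comm, ← nsmul_eq_mul]
    · rw [if_neg hmem]
      refine Finset.sum_eq_zero fun m hm => ?_
      rw [if_neg]
      intro hc
      exact hmem (by rw [← hforce m hc]; exact (mem_piAntidiag.mp hm).1)
  rw [Finset.sum_congr rfl fun g _ => hterm g]
  -- Step F: fiberwise sum over counts
  have hmaps : ∀ g ∈ (univ : Finset (Fin k → Fin (d + 2))),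
      (fun j => (univ.filter fun i => g i = j).card)
        ∈ Fintype.piFinset (fun _ : Fin (d + 2) => Finset.range (k + 1)) := by
    intro g _
    rw [Fintype.mem_piFinset]
    intro j
    rw [Finset.mem_range]
    have h := Finset.card_filter_le (univ : Finset (Fin k)) (fun i => g i = j)
    simp only [Finset.card_univ, Fintype.card_fin] at h
    omega
  rw [← Finset.sum_fiberwise_of_maps_to hmaps]
  refine Finset.sum_congr rfl fun s hs => ?_
  -- facts about any g in the fiber of s
  have hfact : ∀ g : Fin k → Fin (d + 2),
      (fun j => (univ.filter fun i => g i = j).card) = s →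
      (∑ j : Fin (d + 2), s j) = k ∧
      (∑ i : Fin k, (g i : ℕ)) = ∑ j : Fin (d + 2), (j : ℕ) * s j ∧
      (∏ i : Fin k, σ ((g i : ℕ))) = ∏ j : Fin (d + 2), σ ((j : ℕ)) ^ s j ∧
      (∏ i : Fin k, Nat.factorial (n - d - 1 + (g i : ℕ)))
        = ∏ j : Fin (d + 2), Nat.factorial (n - d - 1 + (j : ℕ)) ^ s j := by
    intro g hg
    have hcard : ∀ j, (univ.filter fun i => g i = j).card = s j := fun j => congrFun hg j
    refine ⟨?_, ?_, ?_, ?_⟩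
    · have he : (∑ j : Fin (d + 2), s j)
          = ∑ j : Fin (d + 2), (univ.filter fun i => g i = j).card :=
        Finset.sum_congr rfl fun j _ => (hcard j).symm
      rw [he]
      simpa using Finset.sum_fiberwise (univ : Finset (Fin k)) g (fun _ => (1 : ℕ))
    · rw [← Finset.sum_fiberwise (univ : Finset (Fin k)) g (fun i => (g i : ℕ))]
      refine Finset.sum_congr rfl fun j _ => ?_
      rw [Finset.sum_congr rfl fun i hi => by
        rw [(Finset.mem_filter.mp hi).2] , Finset.sum_const, hcard j, smul_eq_mul, mul_comm]
    · rw [← Finset.prod_fiberwise (univ : Finset (Fin k)) g (fun i => σ ((g i : ℕ)))]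
      refine Finset.prod_congr rfl fun j _ => ?_
      rw [Finset.prod_congr rfl fun i hi => by
        rw [(Finset.mem_filter.mp hi).2], Finset.prod_const, hcard j]
    · rw [← Finset.prod_fiberwise (univ : Finset (Fin k)) g
        (fun i => Nat.factorial (n - d - 1 + (g i : ℕ)))]
      refine Finset.prod_congr rfl fun j _ => ?_
      rw [Finset.prod_congr rfl fun i hi => by
        rw [(Finset.mem_filter.mp hi).2], Finset.prod_const, hcard j]
  by_cases hsk : (∑ j : Fin (d + 2), s j) = k
  · -- fiber value
    have hval : ∀ g ∈ (univ : Finset (Fin k → Fin (d + 2))).filter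
        (fun g => (fun j => (univ.filter fun i => g i = j).card) = s),
        (if (∑ i : Fin k, (n - d - 1 + (g i : ℕ))) = D then
          Nat.multinomial univ (fun i => n - d - 1 + (g i : ℕ)) • ∏ i : Fin k, σ ((g i : ℕ))
        else 0)
        = if (∑ j : Fin (d + 2), (j : ℕ) * s j) = (d + 1) * (n - d) then
            (Nat.factorial D /
              ∏ j : Fin (d + 2), Nat.factorial (n - d - 1 + (j : ℕ)) ^ s j) •
              ∏ j : Fin (d + 2), σ ((j : ℕ)) ^ s j
          else 0 := by
      intro g hg
      obtain ⟨_, hsum, hprod, hfactprod⟩ := hfact g (Finset.mem_filter.mp hg).2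
      have hsum2 : (∑ i : Fin k, (n - d - 1 + (g i : ℕ)))
          = k * (n - d - 1) + ∑ j : Fin (d + 2), (j : ℕ) * s j := by
        rw [Finset.sum_add_distrib, Finset.sum_const, Finset.card_univ, Fintype.card_fin,
          smul_eq_mul, hsum]
      have hiff : (∑ i : Fin k, (n - d - 1 + (g i : ℕ))) = D ↔
          (∑ j : Fin (d + 2), (j : ℕ) * s j) = (d + 1) * (n - d) := by
        rw [hsum2, hD]; omega
      by_cases hc : (∑ j : Fin (d + 2), (j : ℕ) * s j) = (d + 1) * (n - d)
      · rw [if_pos (hiff.mpr hc), if_pos hc, hprod]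
        congr 1
        rw [Nat.multinomial]
        rw [hfactprod]
        congr 1
        rw [← Finset.sum_congr rfl fun i (_ : i ∈ univ) => rfl]
        exact congrArg Nat.factorial (hiff.mpr hc)
      · rw [if_neg (fun h => hc (hiff.mp h)), if_neg hc]
    rw [Finset.sum_congr rfl hval, Finset.sum_const]
    have hcardfiber := card_fiber_eq_multinomial s (by rw [hsk, Fintype.card_fin])
    rw [hcardfiber]
    by_cases hc : (∑ j : Fin (d + 2), (j : ℕ) * s j) = (d + 1) * (n - d)
    · rw [if_pos hc, if_pos ⟨hsk, hc⟩, smul_smul]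
    · rw [if_neg hc, if_neg (fun h => hc h.2), smul_zero]
  · -- empty fiber
    have hempty : (univ : Finset (Fin k → Fin (d + 2))).filter
        (fun g => (fun j => (univ.filter fun i => g i = j).card) = s) = ∅ := by
      rw [Finset.filter_eq_empty_iff]
      intro g _
      intro hg
      exact hsk (hfact g hg).1
    rw [hempty, Finset.sum_empty, if_neg (fun h => hsk h.1)]
end
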